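/- Let (X, 𝓑) be a primitive uniform space and let f : X → X be a nonexpansive mapping. Assume Y ⊆ X is nonempty and f(Y) ⊆ Y. Then x ∈ c_𝓑(f, Y) implies f(x) ∈ c_𝓑(f, Y); moreover, if x ∈ c_𝓑(f, Y) and c_𝓑(f, Y) is a singleton, then f(x) = x, i.e. x is a fixed point of f. -/

import Mathlib

/-- For an entourage `B ⊆ X × X` and `x : X`, `entBall B x = {y | (x, y) ∈ B}`. -/
def entBall {X : Type*} (B : Set (X × X)) (x : X) : Set X := {y | (x, y) ∈ B}

/-- `f : X → X` is nonexpansive w.r.t. `𝓑` if `f(B(x)) ⊆ B(f(x))` for all `x` and `B ∈ 𝓑`. -/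
def Nonexpansive {X : Type*} (𝓑 : Set (Set (X × X))) (f : X → X) : Prop :=
  ∀ x : X, ∀ B ∈ 𝓑, f '' entBall B x ⊆ entBall B (f x)

/-- The centre `c_𝓑(f, Y)` of a mapping `f : X → X` on `Y ⊆ X`. -/
def centreMap {X : Type*} (𝓑 : Set (Set (X × X))) (f : X → X) (Y : Set X) : Set X :=
  {x | ⋂₀ {B ∈ 𝓑 | ∃ n : ℕ, ∃ z : X, f^[n] '' Y ⊆ entBall B z} =
       ⋂₀ {B ∈ 𝓑 | ∃ n : ℕ, f^[n] '' Y ⊆ entBall B x}}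

/-- Theorem 6: in a primitive uniform space `(X, 𝓑)`, if `f` is
nonexpansive, `Y ⊆ X` is nonempty and `f(Y) ⊆ Y`, then `x ∈ c_𝓑(f, Y)` implies
`f(x) ∈ c_𝓑(f, Y)`; and if moreover `c_𝓑(f, Y)` is a singleton, then `f(x) = x`. -/
theorem stmt1 {X : Type*} [Nonempty X] (𝓑 : Set (Set (X × X)))
    (hUniv : (Set.univ : Set (X × X)) ∈ 𝓑)
    (f : X → X) (hf : Nonexpansive 𝓑 f)
    (Y : Set X) (hY : Y.Nonempty) (hfY : f '' Y ⊆ Y)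
    (x : X) (hx : x ∈ centreMap 𝓑 f Y) :
    f x ∈ centreMap 𝓑 f Y ∧
      ((∃ w, centreMap 𝓑 f Y = {w}) → f x = x) := by
  have key : ∀ y : X, {B ∈ 𝓑 | ∃ n : ℕ, f^[n] '' Y ⊆ entBall B y} ⊆
      {B ∈ 𝓑 | ∃ n : ℕ, ∃ z : X, f^[n] '' Y ⊆ entBall B z} := by
    intro y B hB
    exact ⟨hB.1, hB.2.choose, y, hB.2.choose_spec⟩
  have hTx : {B ∈ 𝓑 | ∃ n : ℕ, f^[n] '' Y ⊆ entBall B x} ⊆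
      {B ∈ 𝓑 | ∃ n : ℕ, f^[n] '' Y ⊆ entBall B (f x)} := by
    rintro B ⟨hB, n, hn⟩
    refine ⟨hB, n + 1, ?_⟩
    rw [Function.iterate_succ', Set.image_comp]
    exact (Set.image_mono (f := f) hn).trans (hf x B hB)
  have hcen : f x ∈ centreMap 𝓑 f Y := by
    have h1 : ⋂₀ {B ∈ 𝓑 | ∃ n : ℕ, ∃ z : X, f^[n] '' Y ⊆ entBall B z} ⊆
        ⋂₀ {B ∈ 𝓑 | ∃ n : ℕ, f^[n] '' Y ⊆ entBall B (f x)} :=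
      Set.sInter_subset_sInter (key (f x))
    have h2 : ⋂₀ {B ∈ 𝓑 | ∃ n : ℕ, f^[n] '' Y ⊆ entBall B (f x)} ⊆
        ⋂₀ {B ∈ 𝓑 | ∃ n : ℕ, f^[n] '' Y ⊆ entBall B x} :=
      Set.sInter_subset_sInter hTx
    exact Set.Subset.antisymm h1 (h2.trans_eq hx.symm)
  refine ⟨hcen, fun ⟨w, hw⟩ => ?_⟩
  have h1 : x = w := by rw [← Set.mem_singleton_iff, ← hw]; exact hx
  have h2 : f x = w := by rw [← Set.mem_singleton_iff, ← hw]; exact hcen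
  exact h2.trans h1.symm
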